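/- For every integer M ≥ 1 and every real a > 0, the function B ↦ B · e^{aB} · Σ_{i=0}^{M−1} E_{i+1}(a B) is concave on (0, ∞). -/

import Mathlib

open MeasureTheory Real

/-- The generalized exponential integral `E_n(x) = ∫_1^∞ e^{-x t} / t^n dt`. -/
noncomputable def expInt (n : ℕ) (x : ℝ) : ℝ :=
  ∫ t in Set.Ioi (1 : ℝ), Real.exp (-x * t) / t ^ n

namespace NoiseLimitedAux

open Set

lemma geom_aux (M : ℕ) {t : ℝ} (ht : 1 < t) :
    ∑ i ∈ Finset.range M, 1 / t ^ (i + 1) = (1 - (1/t) ^ M) / (t - 1) := by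
  have ht0 : t ≠ 0 := by linarith
  have ht1 : t - 1 ≠ 0 := by intro h; apply ht.ne'; linarith
  induction M with
  | zero => simp
  | succ n ih =>
    rw [Finset.sum_range_succ, ih]
    rw [one_div_pow, one_div_pow]
    field_simp
    ring

lemma one_sub_pow_le' {r : ℝ} (h0 : 0 ≤ r) (h1 : r ≤ 1) (n : ℕ) :
    1 - r ^ n ≤ n * (1 - r) := by
  induction n with
  | zero => simp
  | succ m ih =>
    have : 1 - r ^ (m+1) = (1 - r ^ m) + r ^ m * (1 - r) := by ring
    rw [this]; push_cast
    nlinarith [pow_nonneg h0 m, pow_le_one₀ h0 h1 (n := m)]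

lemma phi_nonneg {M : ℕ} {x s : ℝ} (hx : 0 < x) (hs : 0 < s) :
    0 ≤ x - x ^ (M+1) / (x + s) ^ M := by
  have hxs : 0 < x + s := by linarith
  have hr : x ^ (M+1) / (x+s) ^ M ≤ x := by
    rw [div_le_iff₀ (by positivity)]
    calc x ^ (M+1) = x * x ^ M := by ring
      _ ≤ x * (x+s) ^ M := by
          apply mul_le_mul_of_nonneg_left (pow_le_pow_left₀ hx.le (by linarith) M) hx.le
  linarith

lemma phi_le {M : ℕ} {x s : ℝ} (hx : 0 < x) (hs : 0 < s) :
    x - x ^ (M+1) / (x + s) ^ M ≤ M * s := by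
  have hxs : 0 < x + s := by linarith
  have hr : x ^ (M+1) / (x+s) ^ M = x * (x/(x+s)) ^ M := by
    rw [div_pow]; field_simp; ring
  rw [hr]
  have h0 : 0 ≤ x/(x+s) := by positivity
  have h1 : x/(x+s) ≤ 1 := by rw [div_le_one hxs]; linarith
  have key := one_sub_pow_le' h0 h1 M
  have h2 : 1 - x/(x+s) = s/(x+s) := by field_simp; ring
  rw [h2] at key
  have : x - x * (x/(x+s))^M = x * (1 - (x/(x+s))^M) := by ring
  rw [this]
  calc x * (1 - (x/(x+s))^M) ≤ x * (M * (s/(x+s))) :=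
        mul_le_mul_of_nonneg_left (h2 ▸ key) hx.le
    _ = M * s * (x/(x+s)) := by field_simp
    _ ≤ M * s * 1 := by
        apply mul_le_mul_of_nonneg_left h1 (by positivity)
    _ = M * s := by ring

lemma int_phi {M : ℕ} {x : ℝ} (hx : 0 < x) :
    IntegrableOn (fun s : ℝ => Real.exp (-s) / s * (x - x ^ (M+1) / (x + s) ^ M)) (Ioi 0) := by
  apply Integrable.mono' ((exp_neg_integrableOn_Ioi 0 one_pos).const_mul (M:ℝ))
  · apply ContinuousOn.aestronglyMeasurable _ measurableSet_Ioi
    apply ContinuousOn.mul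
    · apply ContinuousOn.div (by fun_prop) (by fun_prop)
      intro s hs; simp only [mem_Ioi] at hs; exact hs.ne'
    · apply ContinuousOn.sub (by fun_prop)
      apply ContinuousOn.div (by fun_prop) (by fun_prop)
      intro s hs; simp only [mem_Ioi] at hs
      exact pow_ne_zero _ (by positivity)
  · filter_upwards [ae_restrict_mem measurableSet_Ioi] with s hs
    simp only [mem_Ioi] at hs
    have h1 := phi_nonneg (M := M) hx hs
    have h2 := phi_le (M := M) hx hs
    rw [Real.norm_eq_abs, abs_of_nonneg (by positivity)]
    calc Real.exp (-s) / s * (x - x ^ (M+1) / (x + s) ^ M)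
        ≤ Real.exp (-s) / s * (M * s) :=
          mul_le_mul_of_nonneg_left h2 (by positivity)
      _ = M * (Real.exp (-1 * s)) := by field_simp

noncomputable def kf (m : ℕ) (u : ℝ) : ℝ := ((m:ℝ)+2) * u^(m+1) - ((m:ℝ)+1) * u^(m+2)

lemma kf_mono (m : ℕ) : MonotoneOn (kf m) (Icc (0:ℝ) 1) := by
  have hder : ∀ u : ℝ, HasDerivAt (kf m)
      (((m:ℝ)+2) * (((m:ℝ)+1) * u^m) - ((m:ℝ)+1) * (((m:ℝ)+2) * u^(m+1))) u := by
    intro u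
    have h1 : HasDerivAt (fun u : ℝ => u ^ (m+1)) (((m:ℝ)+1) * u^m) u := by
      simpa using hasDerivAt_pow (m+1) u
    have h2 : HasDerivAt (fun u : ℝ => u ^ (m+2)) (((m:ℝ)+2) * u^(m+1)) u := by
      simpa using hasDerivAt_pow (m+2) u
    exact (h1.const_mul _).sub (h2.const_mul _)
  apply monotoneOn_of_deriv_nonneg (convex_Icc 0 1)
    (fun u _ => (hder u).differentiableAt.continuousAt.continuousWithinAt)
    (fun u _ => (hder u).differentiableAt.differentiableWithinAt)
  intro u hu
  rw [interior_Icc, mem_Ioo] at hu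
  rw [(hder u).deriv]
  have hle : u^(m+1) ≤ u^m := by
    calc u^(m+1) = u^m * u := by ring
      _ ≤ u^m * 1 := by nlinarith [pow_nonneg hu.1.le m]
      _ = u^m := by ring
  have h2 := mul_le_mul_of_nonneg_left hle (show (0:ℝ) ≤ ((m:ℝ)+1)*((m:ℝ)+2) by positivity)
  nlinarith [h2]

lemma phi_hasDeriv (m : ℕ) {s x : ℝ} (hs : 0 < s) (hx : 0 < x) :
    HasDerivAt (fun x : ℝ => x - x^(m+2)/(x+s)^(m+1)) (1 - kf m (x/(x+s))) x := by
  have hxs : (0:ℝ) < x + s := by linarith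
  have h1 : HasDerivAt (fun x : ℝ => x ^ (m+2)) (((m:ℝ)+2) * x^(m+1)) x := by
    simpa using hasDerivAt_pow (m+2) x
  have h2 : HasDerivAt (fun x : ℝ => (x+s) ^ (m+1)) (((m:ℝ)+1) * (x+s)^m) x := by
    have := (hasDerivAt_pow (m+1) (x+s)).comp x ((hasDerivAt_id' x).add_const s)
    simp at this
    exact this
  have h3 := (hasDerivAt_id x).sub (h1.div h2 (pow_ne_zero _ hxs.ne'))
  refine h3.congr_deriv ?_
  have hk : kf m (x/(x+s)) = (((m:ℝ)+2) * (x/(x+s))^(m+1) - ((m:ℝ)+1) * (x/(x+s))^(m+2)) := rfl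
  rw [hk, div_pow, div_pow]
  field_simp
  ring

lemma phi_concave (m : ℕ) {s : ℝ} (hs : 0 < s) :
    ConcaveOn ℝ (Ioi (0:ℝ)) (fun x : ℝ => x - x^(m+2)/(x+s)^(m+1)) := by
  have hderiv : ∀ x ∈ Ioi (0:ℝ),
      deriv (fun x : ℝ => x - x^(m+2)/(x+s)^(m+1)) x = 1 - kf m (x/(x+s)) :=
    fun x hx => (phi_hasDeriv m hs hx).deriv
  apply AntitoneOn.concaveOn_of_deriv (convex_Ioi 0)
  · exact fun x hx => (phi_hasDeriv m hs hx).differentiableAt.continuousAt.continuousWithinAt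
  · rw [interior_Ioi]
    exact fun x hx => (phi_hasDeriv m hs hx).differentiableAt.differentiableWithinAt
  · rw [interior_Ioi]
    intro x hx y hy hxy
    rw [hderiv x hx, hderiv y hy]
    have hx0 : (0:ℝ) < x := hx
    have hy0 : (0:ℝ) < y := hy
    have hmemx : x/(x+s) ∈ Icc (0:ℝ) 1 :=
      ⟨by positivity, by rw [div_le_one (by linarith)]; linarith⟩
    have hmemy : y/(y+s) ∈ Icc (0:ℝ) 1 :=
      ⟨by positivity, by rw [div_le_one (by linarith)]; linarith⟩
    have hr : x/(x+s) ≤ y/(y+s) := by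
      rw [div_le_div_iff₀ (by linarith) (by linarith)]
      nlinarith
    linarith [kf_mono m hmemx hmemy hr]

lemma intOn_aux {x : ℝ} (hx : 0 < x) (n : ℕ) :
    IntegrableOn (fun t : ℝ => Real.exp (-x * t) / t ^ n) (Ioi 1) := by
  apply Integrable.mono' (exp_neg_integrableOn_Ioi 1 hx)
  · apply ContinuousOn.aestronglyMeasurable _ measurableSet_Ioi
    apply ContinuousOn.div (by fun_prop) (by fun_prop)
    intro t ht
    exact pow_ne_zero _ (by simp at ht; positivity)
  · filter_upwards [ae_restrict_mem measurableSet_Ioi] with t ht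
    simp only [mem_Ioi] at ht
    have h1 : (0:ℝ) < t := by linarith
    have h2 : (1:ℝ) ≤ t ^ n := one_le_pow₀ ht.le
    rw [Real.norm_eq_abs, abs_of_nonneg (by positivity)]
    calc Real.exp (-x*t) / t^n ≤ Real.exp (-x*t) / 1 := by
          apply div_le_div_of_nonneg_left (by positivity) (by norm_num) h2
      _ = Real.exp (-x*t) := by rw [div_one]

lemma shift_aux (F : ℝ → ℝ) : ∫ t in Ioi (1:ℝ), F t = ∫ u in Ioi (0:ℝ), F (u+1) := by
  have := (measurePreserving_add_right volume (1:ℝ)).setIntegral_preimage_emb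
    (measurableEmbedding_addRight 1) F (Ioi 1)
  rw [← this]
  congr 1
  ext x; simp

lemma key_identity (m : ℕ) {x : ℝ} (hx : 0 < x) :
    x * Real.exp x * ∑ i ∈ Finset.range (m+1), expInt (i + 1) x
      = ∫ s in Ioi (0:ℝ), Real.exp (-s) / s * (x - x^(m+2)/(x+s)^(m+1)) := by
  set g : ℝ → ℝ := fun s => Real.exp (-s) / s * (x - x^(m+2)/(x+s)^(m+1)) with hg
  set K : ℝ → ℝ := fun s => x * g s with hK
  have step1 : x * Real.exp x * ∑ i ∈ Finset.range (m+1), expInt (i + 1) x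
      = ∫ t in Ioi (1:ℝ), x * Real.exp x * ∑ i ∈ Finset.range (m+1),
          Real.exp (-x * t) / t ^ (i+1) := by
    simp only [expInt]
    rw [← integral_finset_sum _ (fun i _ => intOn_aux hx (i+1)), ← integral_const_mul]
  have step2 : ∀ t ∈ Ioi (1:ℝ), x * Real.exp x * ∑ i ∈ Finset.range (m+1),
      Real.exp (-x * t) / t ^ (i+1) = K (x * (t - 1)) := by
    intro t ht
    simp only [mem_Ioi] at ht
    have ht0 : t ≠ 0 := by linarith
    have ht1 : t - 1 ≠ 0 := by intro h; linarith [ht]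
    have hsum : ∑ i ∈ Finset.range (m+1), Real.exp (-x * t) / t ^ (i+1)
        = Real.exp (-x*t) * ((1 - (1/t)^(m+1)) / (t-1)) := by
      rw [← geom_aux (m+1) ht, Finset.mul_sum]
      exact Finset.sum_congr rfl fun i _ => by ring
    have hexp : Real.exp (-(x*(t-1))) = Real.exp (-x*t) * Real.exp x := by
      rw [← Real.exp_add]; ring_nf
    have hxt : x + x*(t-1) = x*t := by ring
    simp only [hK, hg, hexp, hxt]
    rw [hsum, one_div_pow]
    have htp : (t:ℝ)^(m+1) ≠ 0 := pow_ne_zero _ ht0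
    have hxp : (x:ℝ)^(m+1) ≠ 0 := pow_ne_zero _ hx.ne'
    field_simp
    ring
  have step3 : (∫ t in Ioi (1:ℝ), x * Real.exp x * ∑ i ∈ Finset.range (m+1),
      Real.exp (-x * t) / t ^ (i+1)) = ∫ t in Ioi (1:ℝ), K (x * (t-1)) :=
    setIntegral_congr_fun measurableSet_Ioi step2
  have step4 : (∫ t in Ioi (1:ℝ), K (x * (t-1))) = ∫ u in Ioi (0:ℝ), K (x * u) := by
    rw [shift_aux (fun t => K (x * (t-1)))]
    simp
  have step5 : (∫ u in Ioi (0:ℝ), K (x * u)) = x⁻¹ • ∫ s in Ioi (0:ℝ), K s := by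
    simpa using integral_comp_mul_left_Ioi K 0 hx
  have step6 : x⁻¹ • (∫ s in Ioi (0:ℝ), K s) = ∫ s in Ioi (0:ℝ), g s := by
    simp only [hK, integral_const_mul, smul_eq_mul]
    rw [← mul_assoc, inv_mul_cancel₀ hx.ne', one_mul]
  rw [step1, step3, step4, step5, step6]

lemma F_concave (m : ℕ) :
    ConcaveOn ℝ (Ioi (0:ℝ))
      (fun x : ℝ => ∫ s in Ioi (0:ℝ), Real.exp (-s) / s * (x - x^(m+2)/(x+s)^(m+1))) := by
  refine ⟨convex_Ioi 0, ?_⟩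
  intro x hx y hy α β hα hβ hαβ
  have hz : α • x + β • y ∈ Ioi (0:ℝ) := (convex_Ioi 0) hx hy hα hβ hαβ
  have hix : IntegrableOn
      (fun s : ℝ => Real.exp (-s) / s * (x - x ^ (m+1+1) / (x + s) ^ (m+1))) (Ioi 0) :=
    int_phi (M := m+1) hx
  have hiy : IntegrableOn
      (fun s : ℝ => Real.exp (-s) / s * (y - y ^ (m+1+1) / (y + s) ^ (m+1))) (Ioi 0) :=
    int_phi (M := m+1) hy
  have hiz : IntegrableOn (fun s : ℝ => Real.exp (-s) / s *
      ((α • x + β • y) - (α • x + β • y) ^ (m+1+1) / ((α • x + β • y) + s) ^ (m+1))) (Ioi 0) :=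
    int_phi (M := m+1) hz
  simp only [smul_eq_mul] at *
  rw [← integral_const_mul α, ← integral_const_mul β, ← integral_add
    (hix.const_mul α) (hiy.const_mul β)]
  apply setIntegral_mono_on ((hix.const_mul α).add (hiy.const_mul β)) hiz measurableSet_Ioi
  intro s hs
  simp only [mem_Ioi] at hs
  have hcon := (phi_concave m hs).2 hx hy hα hβ hαβ
  simp only [smul_eq_mul] at hcon
  have hw : 0 ≤ Real.exp (-s) / s := by positivity
  calc α * (Real.exp (-s) / s * (x - x ^ (m+2) / (x + s) ^ (m+1)))
        + β * (Real.exp (-s) / s * (y - y ^ (m+2) / (y + s) ^ (m+1)))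
      = Real.exp (-s) / s * (α * (x - x ^ (m+2) / (x + s) ^ (m+1))
          + β * (y - y ^ (m+2) / (y + s) ^ (m+1))) := by ring
    _ ≤ Real.exp (-s) / s * ((α*x + β*y) - (α*x + β*y) ^ (m+2) / ((α*x + β*y) + s) ^ (m+1)) :=
        mul_le_mul_of_nonneg_left hcon hw

end NoiseLimitedAux

open NoiseLimitedAux in
/-- For every integer `M ≥ 1` and real `a > 0`, the (scaled) noise-limited ergodic
capacity `B ↦ B e^{aB} Σ_{i=0}^{M−1} E_{i+1}(aB)` is concave on `(0, ∞)`. -/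
theorem concaveOn_noise_limited_capacity (M : ℕ) (hM : 1 ≤ M) (a : ℝ) (ha : 0 < a) :
    ConcaveOn ℝ (Set.Ioi 0)
      (fun B : ℝ => B * Real.exp (a * B) * ∑ i ∈ Finset.range M, expInt (i + 1) (a * B)) := by
  obtain ⟨m, rfl⟩ : ∃ m, M = m + 1 := ⟨M - 1, (Nat.succ_pred_eq_of_pos hM).symm⟩
  set F : ℝ → ℝ := fun x =>
    ∫ s in Set.Ioi (0:ℝ), Real.exp (-s) / s * (x - x^(m+2)/(x+s)^(m+1)) with hF
  have hval : ∀ B : ℝ, 0 < B →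
      B * Real.exp (a * B) * ∑ i ∈ Finset.range (m+1), expInt (i + 1) (a * B)
        = a⁻¹ * F (a * B) := by
    intro B hB
    have hx : 0 < a * B := mul_pos ha hB
    have h := key_identity m hx
    have : B * Real.exp (a * B) * ∑ i ∈ Finset.range (m+1), expInt (i + 1) (a * B)
        = a⁻¹ * ((a * B) * Real.exp (a * B) *
            ∑ i ∈ Finset.range (m+1), expInt (i + 1) (a * B)) := by
      field_simp
    rw [this, h]
  refine ⟨convex_Ioi 0, ?_⟩
  intro B hB C hC α β hα hβ hαβ
  have hB0 : (0:ℝ) < B := hB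
  have hC0 : (0:ℝ) < C := hC
  have hz : α • B + β • C ∈ Set.Ioi (0:ℝ) := (convex_Ioi 0) hB hC hα hβ hαβ
  have hz0 : (0:ℝ) < α • B + β • C := hz
  simp only [smul_eq_mul] at *
  rw [hval B hB0, hval C hC0, hval _ hz0]
  have hmemB : a * B ∈ Set.Ioi (0:ℝ) := mul_pos ha hB0
  have hmemC : a * C ∈ Set.Ioi (0:ℝ) := mul_pos ha hC0
  have hcon := (F_concave m).2 hmemB hmemC hα hβ hαβ
  simp only [smul_eq_mul] at hcon
  have heq : a * (α * B + β * C) = α * (a * B) + β * (a * C) := by ring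
  rw [heq]
  have := mul_le_mul_of_nonneg_left hcon (inv_nonneg.mpr ha.le)
  linarith [this]
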